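/- Let (N, ⟨·,·⟩) be a finite-dimensional nilpotent metric Jordan algebra with orthonormal basis {E_i}. Define M: N → N by ⟨MX, Y⟩ = −½ Σ_{i,j}⟨XE_i, E_j⟩⟨YE_i, E_j⟩ + ¼ Σ_{i,j}⟨E_iE_j, X⟩⟨E_iE_j, Y⟩. Then Tr M = −¼ Σ_{i,j,k}⟨E_iE_j, E_k⟩² ≤ 0, with equality if and only if the multiplication of N is identically zero. -/
import Mathlib


open RealInnerProductSpace

/-- The descending power series A⁰ = A, A^{k+1} = A·A^k of a (Jordan) algebra. -/
def jordanPow {V : Type*} [AddCommGroup V] [Module ℝ V]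
    (mul : V →ₗ[ℝ] V →ₗ[ℝ] V) : ℕ → Submodule ℝ V
  | 0 => ⊤
  | (k + 1) => Submodule.span ℝ {z | ∃ x y, y ∈ jordanPow mul k ∧ z = mul x y}

lemma trace_eq_sum_inner' {V : Type*} [NormedAddCommGroup V] [InnerProductSpace ℝ V]
    [FiniteDimensional ℝ V] {ι : Type*} [Fintype ι] (b : OrthonormalBasis ι ℝ V)
    (M : V →ₗ[ℝ] V) : LinearMap.trace ℝ V M = ∑ i, ⟪M (b i), b i⟫ := by
  classical
  rw [LinearMap.trace_eq_matrix_trace ℝ b.toBasis, Matrix.trace]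
  congr 1
  ext i
  rw [Matrix.diag_apply, LinearMap.toMatrix_apply, OrthonormalBasis.coe_toBasis,
    OrthonormalBasis.coe_toBasis_repr_apply, OrthonormalBasis.repr_apply_apply,
    real_inner_comm]

/-- For a nilpotent metric Jordan algebra, the moment-map operator M
satisfies Tr M = −¼ Σ⟨E_iE_j,E_k⟩² ≤ 0, with equality iff the product is zero. -/
theorem nilpotent_moment_map_trace
    {V : Type*} [NormedAddCommGroup V] [InnerProductSpace ℝ V] [FiniteDimensional ℝ V]
    {ι : Type*} [Fintype ι]
    (mul : V →ₗ[ℝ] V →ₗ[ℝ] V)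
    (comm : ∀ X Y : V, mul X Y = mul Y X)
    (jordan : ∀ X Y : V, mul X (mul (mul X X) Y) = mul (mul X X) (mul X Y))
    (hnil : ∃ m : ℕ, jordanPow mul m = ⊥)
    (b : OrthonormalBasis ι ℝ V)
    (M : V →ₗ[ℝ] V)
    (hM : ∀ X Y : V, ⟪M X, Y⟫ =
      -(1/2) * ∑ i, ∑ j, ⟪mul X (b i), b j⟫ * ⟪mul Y (b i), b j⟫
      + (1/4) * ∑ i, ∑ j, ⟪mul (b i) (b j), X⟫ * ⟪mul (b i) (b j), Y⟫) :
    LinearMap.trace ℝ V M = -(1/4) * ∑ i, ∑ j, ∑ k, ⟪mul (b i) (b j), b k⟫ ^ 2 ∧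
    LinearMap.trace ℝ V M ≤ 0 ∧
    (LinearMap.trace ℝ V M = 0 ↔ ∀ X Y : V, mul X Y = 0) := by
  classical
  set S : ℝ := ∑ i, ∑ j, ∑ k, ⟪mul (b i) (b j), b k⟫ ^ 2 with hSdef
  have h1 : (∑ k, ∑ i, ∑ j, ⟪mul (b k) (b i), b j⟫ * ⟪mul (b k) (b i), b j⟫) = S := by
    simp [hSdef, sq]
  have h2 : (∑ k, ∑ i, ∑ j, ⟪mul (b i) (b j), b k⟫ * ⟪mul (b i) (b j), b k⟫) = S := by
    rw [hSdef, Finset.sum_comm]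
    refine Finset.sum_congr rfl fun i _ => ?_
    rw [Finset.sum_comm]
    exact Finset.sum_congr rfl fun j _ => Finset.sum_congr rfl fun k _ => (sq _).symm
  have htr : LinearMap.trace ℝ V M = -(1/4) * S := by
    rw [trace_eq_sum_inner' b M]
    simp_rw [hM]
    rw [Finset.sum_add_distrib, ← Finset.mul_sum, ← Finset.mul_sum, h1, h2]
    ring
  have hSnonneg : 0 ≤ S := by
    refine Finset.sum_nonneg fun i _ => Finset.sum_nonneg fun j _ =>
      Finset.sum_nonneg fun k _ => sq_nonneg _
  refine ⟨htr, by rw [htr]; linarith, ?_⟩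
  constructor
  · intro h X Y
    have hS0 : S = 0 := by rw [htr] at h; linarith
    -- each inner product vanishes
    have hz : ∀ i j, mul (b i) (b j) = 0 := by
      intro i j
      have hinner : ∀ k, ⟪b k, mul (b i) (b j)⟫ = 0 := by
        intro k
        have h1 := (Finset.sum_eq_zero_iff_of_nonneg
          (fun i _ => Finset.sum_nonneg fun j _ => Finset.sum_nonneg fun k _ => sq_nonneg
            (⟪mul (b i) (b j), b k⟫))).mp hS0 i (Finset.mem_univ i)
        have h2 := (Finset.sum_eq_zero_iff_of_nonneg
          (fun j _ => Finset.sum_nonneg fun k _ => sq_nonneg _)).mp h1 j (Finset.mem_univ j)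
        have h3 := (Finset.sum_eq_zero_iff_of_nonneg
          (fun k _ => sq_nonneg _)).mp h2 k (Finset.mem_univ k)
        have := pow_eq_zero_iff (n := 2) (by norm_num) |>.mp h3
        rw [real_inner_comm] at this
        exact this
      apply b.repr.injective
      ext k
      simp [b.repr_apply_apply, hinner k]
    have hX := b.sum_repr X
    have hY := b.sum_repr Y
    calc mul X Y = mul (∑ i, b.repr X i • b i) (∑ j, b.repr Y j • b j) := by rw [hX, hY]
      _ = 0 := by
          simp only [map_sum, LinearMap.sum_apply, map_smul, LinearMap.smul_apply, hz,
            smul_zero, Finset.sum_const_zero]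
  · intro h
    rw [htr, hSdef]
    simp [h]
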